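/- For every nonzero h ∈ Z[ω] and every γ, π ∈ Z[ω] with γ ≡ π ≡ 1 (mod 3), one has ě(−γ²πh³/(3λ)) = ě(−h³/(3λ)) = 1, where λ = 1 + 2ω and ě(z) = e^{2πi(z+z̄)}. -/

import Mathlib

open scoped Classical
open MeasureTheory

noncomputable section

def ω3 : ℂ := Complex.exp (2 * Real.pi * Complex.I / 3)

def Zω : Subring ℂ := Subring.closure {ω3}

def ωE : Zω := ⟨ω3, Subring.subset_closure rfl⟩

def lam : Zω := 1 + 2 * ωE

def natNorm (a : Zω) : ℕ := ⌊Complex.normSq (a : ℂ)⌋₊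

def eE (z : ℂ) : ℂ := Complex.exp (2 * Real.pi * Complex.I * (z + (starRingEnd ℂ) z))

lemma Zω_coe_two : ((2 : Zω) : ℂ) = 2 := rfl
lemma Zω_coe_three : ((3 : Zω) : ℂ) = 3 := rfl
lemma Zω_coe_six : ((6 : Zω) : ℂ) = 6 := rfl
lemma Zω_coe_nine : ((9 : Zω) : ℂ) = 9 := rfl

lemma ω3_eq' : ω3 = Complex.exp ((2 * Real.pi / 3 : ℝ) * Complex.I) := by
  rw [ω3]; norm_num; ring_nf

lemma ω3_cube : ω3 ^ 3 = 1 := by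
  rw [ω3, ← Complex.exp_nat_mul]
  rw [show (3 : ℕ) * (2 * Real.pi * Complex.I / 3) = 2 * Real.pi * Complex.I by
    push_cast; ring]
  exact Complex.exp_two_pi_mul_I

lemma ω3_ne_zero : ω3 ≠ 0 := Complex.exp_ne_zero _

lemma ω3_conj : (starRingEnd ℂ) ω3 = ω3 ^ 2 := by
  have h1 : (starRingEnd ℂ) ω3 * ω3 = 1 := by
    rw [mul_comm, Complex.mul_conj]
    norm_cast
    rw [ω3, Complex.normSq_eq_norm_sq, Complex.norm_exp]
    simp
  have h2 : ω3 ^ 2 * ω3 = 1 := by rw [← pow_succ]; exact ω3_cube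
  exact mul_right_cancel₀ ω3_ne_zero (h1.trans h2.symm)

lemma ω3_sq : ω3 ^ 2 = -1 - ω3 := by
  have h3 := ω3_cube
  have hne : ω3 ≠ 1 := by
    intro h
    have him : ω3.im = 0 := by rw [h]; simp
    rw [ω3_eq', Complex.exp_ofReal_mul_I_im] at him
    have : Real.sin (2 * Real.pi / 3) > 0 := by
      apply Real.sin_pos_of_pos_of_lt_pi <;> nlinarith [Real.pi_pos]
    linarith
  have h0 : (ω3 - 1) * (ω3 ^ 2 + ω3 + 1) = 0 := by linear_combination h3
  rcases mul_eq_zero.mp h0 with h | h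
  · exact absurd (sub_eq_zero.mp h) hne
  · linear_combination h

lemma Zω_decomp (a : Zω) : ∃ m n : ℤ, (a : ℂ) = m + n * ω3 := by
  obtain ⟨a, ha⟩ := a
  refine Subring.closure_induction ?_ ?_ ?_ ?_ ?_ ?_ ha
  · rintro x rfl; exact ⟨0, 1, by simp⟩
  · exact ⟨0, 0, by simp⟩
  · exact ⟨1, 0, by simp⟩
  · rintro x y _ _ ⟨m, n, rfl⟩ ⟨m', n', rfl⟩
    exact ⟨m + m', n + n', by push_cast; ring⟩
  · rintro x _ ⟨m, n, rfl⟩; exact ⟨-m, -n, by push_cast; ring⟩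
  · rintro x y _ _ ⟨m, n, rfl⟩ ⟨m', n', rfl⟩
    refine ⟨m * m' - n * n', m * n' + m' * n - n * n', ?_⟩
    push_cast
    linear_combination (n : ℂ) * n' * ω3_sq

lemma lam_coe : (lam : ℂ) = 1 + 2 * ω3 := by
  show ((1 + 2 * ωE : Zω) : ℂ) = _
  push_cast [ωE]
  rfl

lemma lam_ne : (lam : ℂ) ≠ 0 := by
  intro h
  have h2 : ((lam : ℂ)) ^ 2 = -3 := by
    rw [lam_coe]; linear_combination 4 * ω3_sq
  rw [h] at h2; norm_num at h2

lemma conj_ω3 : (starRingEnd ℂ) ω3 = -1 - ω3 := by rw [ω3_conj, ω3_sq]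

lemma key (x y : ℤ) : eE (-((x : ℂ) + 3 * y * ω3) / (3 * (lam : ℂ))) = 1 := by
  have hc : (starRingEnd ℂ) (-((x : ℂ) + 3 * y * ω3) / (3 * (lam : ℂ)))
      = -((x : ℂ) + 3 * y * (-1 - ω3)) / (3 * -(1 + 2 * ω3)) := by
    rw [lam_coe, map_div₀]
    simp [conj_ω3, map_ofNat]
    ring
  have hsum : -((x : ℂ) + 3 * y * ω3) / (3 * (lam : ℂ))
      + (starRingEnd ℂ) (-((x : ℂ) + 3 * y * ω3) / (3 * (lam : ℂ))) = -(y : ℂ) := by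
    rw [hc, lam_coe]
    have hne : (3 : ℂ) * (1 + 2 * ω3) ≠ 0 := by
      apply mul_ne_zero (by norm_num)
      rw [← lam_coe]; exact lam_ne
    have h2 : -(-((x : ℂ) + 3 * y * (-1 - ω3)) / (3 * (1 + 2 * ω3)))
        = ((x : ℂ) + 3 * y * (-1 - ω3)) / (3 * (1 + 2 * ω3)) := by rw [neg_div, neg_neg]
    rw [mul_neg, div_neg, h2, ← add_div,
      show -((x : ℂ) + 3 * y * ω3) + ((x : ℂ) + 3 * y * (-1 - ω3))
        = -(y : ℂ) * (3 * (1 + 2 * ω3)) by ring,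
      mul_div_assoc, div_self hne, mul_one]
  rw [eE, hsum,
    show 2 * (Real.pi : ℂ) * Complex.I * (-(y : ℂ))
      = ((-y : ℤ) : ℂ) * (2 * Real.pi * Complex.I) by push_cast; ring,
    Complex.exp_int_mul_two_pi_mul_I]

theorem stmt7 (h γ p : Zω) (hh : h ≠ 0)
    (hγ : (3 : Zω) ∣ (γ - 1)) (hp : (3 : Zω) ∣ (p - 1)) :
    eE (-((γ : ℂ) ^ 2 * (p : ℂ) * (h : ℂ) ^ 3) / (3 * (lam : ℂ))) = 1 ∧
    eE (-((h : ℂ) ^ 3) / (3 * (lam : ℂ))) = 1 := by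
  obtain ⟨g, hg⟩ := hγ
  obtain ⟨q, hq⟩ := hp
  obtain ⟨m, n, hmn⟩ := Zω_decomp h
  have hG : (γ : ℂ) = 1 + 3 * (g : ℂ) := by
    have := congrArg (fun z : Zω => (z : ℂ)) hg
    push_cast at this
    simp only [Zω_coe_three] at this
    linear_combination this
  have hQ : (p : ℂ) = 1 + 3 * (q : ℂ) := by
    have := congrArg (fun z : Zω => (z : ℂ)) hq
    push_cast at this
    simp only [Zω_coe_three] at this
    linear_combination this
  have hc1 : (h : ℂ) ^ 3 = ((m ^ 3 + n ^ 3 - 3 * m * n ^ 2 : ℤ) : ℂ)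
      + 3 * ((m ^ 2 * n - m * n ^ 2 : ℤ) : ℂ) * ω3 := by
    rw [hmn]; push_cast
    linear_combination ((3 * m * n ^ 2 + n ^ 3 * ω3 - n ^ 3 : ℂ)) * ω3_sq
  obtain ⟨U, V, hUV⟩ := Zω_decomp ((2 * g + q + 6 * g * q + 3 * g ^ 2 + 9 * g ^ 2 * q) * h ^ 3)
  have hsv : (2 * (g : ℂ) + (q : ℂ) + 6 * (g : ℂ) * (q : ℂ) + 3 * (g : ℂ) ^ 2
      + 9 * (g : ℂ) ^ 2 * (q : ℂ)) * (h : ℂ) ^ 3 = (U : ℂ) + (V : ℂ) * ω3 := by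
    push_cast at hUV
    simp only [Zω_coe_two, Zω_coe_three, Zω_coe_six, Zω_coe_nine] at hUV
    linear_combination hUV
  have ha : (γ : ℂ) ^ 2 * (p : ℂ) * (h : ℂ) ^ 3
      = ((m ^ 3 + n ^ 3 - 3 * m * n ^ 2 + 3 * U : ℤ) : ℂ)
        + 3 * ((m ^ 2 * n - m * n ^ 2 + V : ℤ) : ℂ) * ω3 := by
    rw [hG, hQ]
    push_cast at hc1 ⊢
    linear_combination hc1 + 3 * hsv
  constructor
  · rw [ha]; exact key _ _
  · rw [hc1]; exact key _ _
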